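/- arXiv:2306.00172 — 2 statements merged into one kernel-verified Lean document; each statement's English description precedes it below -/
import Mathlib

section
/- For every ρ ∈ [0,1], every B ≥ 0, every feasible expert strategy x^π, and every sequence of RL suggestions x̃_1, …, x̃_T (each x̃_v ∈ U ∪ {skip}, and whenever x̃_v = u ∈ U the item u has remaining capacity under LOMAR's own counts), the strategy x produced by LOMAR's switching rule satisfies, at every step v ∈ {0, 1, …, T}, the invariant R_v ≥ ρ·( R^π_v + Σ_{u∈U} (|V_{u,v}| − |V^π_{u,v}|)^+ · wmax(u) ) − B. -/
/-- `cnt x u v` = `|V_{u,v}|`: the number of online items among steps `1, …, v`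
that strategy `x` matches to offline item `u`. -/
def cnt {U : Type*} [DecidableEq U] (x : ℕ → Option U) (u : U) (v : ℕ) : ℕ :=
  ((Finset.Icc 1 v).filter fun v' => x v' = some u).card

/-- `rew w x v` = `R_v`: the cumulative reward of strategy `x` after step `v`
(skipped steps contribute `0`). -/
def rew {U : Type*} (w : U → ℕ → ℝ) (x : ℕ → Option U) (v : ℕ) : ℝ :=
  ∑ v' ∈ Finset.Icc 1 v, ((x v').elim (0 : ℝ) fun u => w u v')

/-- LOMAR's switching condition at step `v` (no free disposal): the RL suggestion
`x̃_v` may be followed iff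
`R_{v−1} + w(x̃_v, v) ≥ ρ·(R^π_v + Σ_u (|V_{u,v−1}| − |V^π_{u,v}| + 1{u = x̃_v})⁺ · wmax(u)) − B`. -/
def lomarCond {U : Type*} [Fintype U] [DecidableEq U] (wmax : U → ℝ) (w : U → ℕ → ℝ)
    (ρ B : ℝ) (xπ x xt : ℕ → Option U) (v : ℕ) : Prop :=
  rew w x (v - 1) + ((xt v).elim (0 : ℝ) fun u => w u v) ≥
    ρ * (rew w xπ v +
      ∑ u : U, max ((cnt x u (v - 1) : ℝ) - (cnt xπ u v : ℝ) +
        (if xt v = some u then (1 : ℝ) else 0)) 0 * wmax u) - B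

lemma cnt_succ' {U : Type*} [DecidableEq U] (x : ℕ → Option U) (u : U) (v : ℕ) :
    cnt x u (v + 1) = cnt x u v + (if x (v + 1) = some u then 1 else 0) := by
  unfold cnt
  rw [show Finset.Icc 1 (v + 1) = insert (v + 1) (Finset.Icc 1 v) from
        (Finset.insert_Icc_right_eq_Icc_add_one (by omega)).symm]
  rw [Finset.filter_insert]
  split
  · rw [Finset.card_insert_of_notMem (by simp)]
  · simp

lemma rew_succ' {U : Type*} (w : U → ℕ → ℝ) (x : ℕ → Option U) (v : ℕ) :
    rew w x (v + 1) = rew w x v + ((x (v + 1)).elim (0 : ℝ) fun u => w u (v + 1)) := by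
  unfold rew
  exact Finset.sum_Icc_succ_top (by omega) _

lemma cnt_mono' {U : Type*} [DecidableEq U] (x : ℕ → Option U) (u : U) {v v' : ℕ}
    (h : v ≤ v') : cnt x u v ≤ cnt x u v' :=
  Finset.card_le_card (Finset.filter_subset_filter _ (Finset.Icc_subset_Icc_right h))

/-- **Robustness invariant of LOMAR (no free disposal).**
For every `ρ ∈ [0,1]`, `B ≥ 0`, every feasible expert strategy `x^π`, and every
sequence of RL suggestions `x̃` (which only suggests offline items with remaining
capacity under LOMAR's own counts), the strategy `x` produced by LOMAR's switching
rule satisfies, at every step `v ∈ {0, 1, …, T}`,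
`R_v ≥ ρ·(R^π_v + Σ_u (|V_{u,v}| − |V^π_{u,v}|)⁺ · wmax(u)) − B`. -/
theorem lomar_invariant
    {U : Type*} [Fintype U] [DecidableEq U]
    (c : U → ℕ) (wmax : U → ℝ) (T : ℕ) (w : U → ℕ → ℝ)
    (hw₀ : ∀ u v, 0 ≤ w u v) (hw₁ : ∀ u v, w u v ≤ wmax u)
    (ρ B : ℝ) (hρ₀ : 0 ≤ ρ) (hρ₁ : ρ ≤ 1) (hB : 0 ≤ B)
    (xπ : ℕ → Option U) (hπfeas : ∀ u, cnt xπ u T ≤ c u)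
    (xt x : ℕ → Option U)
    (hxt : ∀ v, 1 ≤ v → v ≤ T → ∀ u, xt v = some u → cnt x u (v - 1) < c u)
    (hfollow : ∀ v, 1 ≤ v → v ≤ T →
      lomarCond wmax w ρ B xπ x xt v → x v = xt v)
    (hexpert : ∀ v, 1 ≤ v → v ≤ T → ¬ lomarCond wmax w ρ B xπ x xt v →
      ∀ u, xπ v = some u → cnt x u (v - 1) < c u → x v = some u)
    (hskip : ∀ v, 1 ≤ v → v ≤ T → ¬ lomarCond wmax w ρ B xπ x xt v →
      (xπ v = none ∨ ∃ u, xπ v = some u ∧ ¬ cnt x u (v - 1) < c u) → x v = none) :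
    ∀ v ≤ T, rew w x v ≥
      ρ * (rew w xπ v +
        ∑ u : U, max ((cnt x u v : ℝ) - (cnt xπ u v : ℝ)) 0 * wmax u) - B := by
  intro v
  induction v with
  | zero =>
    intro _
    simp [cnt, rew]
    nlinarith
  | succ v ih =>
    intro hvT
    have hv1 : 1 ≤ v + 1 := by omega
    have ihv := ih (by omega)
    by_cases hc : lomarCond wmax w ρ B xπ x xt (v + 1)
    · have hx := hfollow (v + 1) hv1 hvT hc
      unfold lomarCond at hc
      simp only [Nat.add_sub_cancel] at hc
      rw [rew_succ', hx]
      have hsum : ∑ u : U, max ((cnt x u (v + 1) : ℝ) - (cnt xπ u (v + 1) : ℝ)) 0 * wmax u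
          = ∑ u : U, max ((cnt x u v : ℝ) - (cnt xπ u (v + 1) : ℝ) +
              (if xt (v + 1) = some u then (1 : ℝ) else 0)) 0 * wmax u := by
        apply Finset.sum_congr rfl
        intro u _
        rw [cnt_succ', hx]
        push_cast
        congr 2
        split <;> ring
      rw [hsum]
      exact hc
    · rcases hpi : xπ (v + 1) with _ | u₀
      · -- expert skips
        have hx := hskip (v + 1) hv1 hvT hc (Or.inl hpi)
        rw [rew_succ', hx, rew_succ' w xπ, hpi]
        have hsum : ∑ u : U, max ((cnt x u (v + 1) : ℝ) - (cnt xπ u (v + 1) : ℝ)) 0 * wmax u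
            = ∑ u : U, max ((cnt x u v : ℝ) - (cnt xπ u v : ℝ)) 0 * wmax u := by
          apply Finset.sum_congr rfl
          intro u _
          rw [cnt_succ', cnt_succ', hx, hpi]
          simp
        rw [hsum]
        simpa using ihv
      · by_cases hcap : cnt x u₀ v < c u₀
        · -- follow expert
          have hx := hexpert (v + 1) hv1 hvT hc u₀ hpi (by simpa using hcap)
          rw [rew_succ', hx, rew_succ' w xπ, hpi]
          have hsum : ∑ u : U, max ((cnt x u (v + 1) : ℝ) - (cnt xπ u (v + 1) : ℝ)) 0 * wmax u
              = ∑ u : U, max ((cnt x u v : ℝ) - (cnt xπ u v : ℝ)) 0 * wmax u := by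
            apply Finset.sum_congr rfl
            intro u _
            rw [cnt_succ', cnt_succ', hx, hpi]
            push_cast
            congr 2
            split <;> ring
          rw [hsum]
          simp only [Option.elim]
          have h1 : ρ * w u₀ (v + 1) ≤ w u₀ (v + 1) :=
            mul_le_of_le_one_left (hw₀ u₀ (v + 1)) hρ₁
          set S := ∑ u : U, max ((cnt x u v : ℝ) - (cnt xπ u v : ℝ)) 0 * wmax u with hS
          have : ρ * (rew w xπ v + w u₀ (v + 1) + S)
              = ρ * (rew w xπ v + S) + ρ * w u₀ (v + 1) := by ring
          linarith
        · -- skip, expert's item is full for LOMAR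
          have hx := hskip (v + 1) hv1 hvT hc
            (Or.inr ⟨u₀, hpi, by simpa using hcap⟩)
          rw [rew_succ', hx, rew_succ' w xπ, hpi]
          -- key: cnt x u₀ v ≥ cnt xπ u₀ (v+1) = cnt xπ u₀ v + 1
          have hd : (cnt xπ u₀ v : ℝ) + 1 ≤ (cnt x u₀ v : ℝ) := by
            have h1 : cnt xπ u₀ (v + 1) ≤ cnt xπ u₀ T := cnt_mono' xπ u₀ hvT
            have h2 : cnt xπ u₀ (v + 1) = cnt xπ u₀ v + 1 := by
              rw [cnt_succ', hpi]; simp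
            have h3 : c u₀ ≤ cnt x u₀ v := by omega
            have := hπfeas u₀
            have : cnt xπ u₀ v + 1 ≤ cnt x u₀ v := by omega
            exact_mod_cast this
          have hsum : ∑ u : U, max ((cnt x u (v + 1) : ℝ) - (cnt xπ u (v + 1) : ℝ)) 0 * wmax u
              = (∑ u : U, max ((cnt x u v : ℝ) - (cnt xπ u v : ℝ)) 0 * wmax u) - wmax u₀ := by
            have hterm : ∀ u : U, max ((cnt x u (v + 1) : ℝ) - (cnt xπ u (v + 1) : ℝ)) 0 * wmax u
                = max ((cnt x u v : ℝ) - (cnt xπ u v : ℝ)) 0 * wmax u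
                  - (if u = u₀ then wmax u₀ else 0) := by
              intro u
              rw [cnt_succ' x, cnt_succ' xπ, hx, hpi]
              by_cases hu : u = u₀
              · subst hu
                simp only [if_pos rfl, reduceCtorEq, if_neg (by simp : ¬ (none : Option U) = some u)]
                push_cast
                rw [max_eq_left (by linarith), max_eq_left (by linarith)]
                ring
              · have : ¬ (some u₀ = some u) := by simpa using fun h => hu h.symm
                simp only [if_neg this, if_neg hu,
                  if_neg (by simp : ¬ (none : Option U) = some u)]
                push_cast
                ring_nf
            rw [Finset.sum_congr rfl (fun u _ => hterm u), Finset.sum_sub_distrib]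
            congr 1
            simp
          rw [hsum]
          simp only [Option.elim]
          have h1 : 0 ≤ ρ * (wmax u₀ - w u₀ (v + 1)) :=
            mul_nonneg hρ₀ (by linarith [hw₁ u₀ (v + 1)])
          set S := ∑ u : U, max ((cnt x u v : ℝ) - (cnt xπ u v : ℝ)) 0 * wmax u with hS
          have h2 : ρ * (rew w xπ v + w u₀ (v + 1) + (S - wmax u₀))
              = ρ * (rew w xπ v + S) - ρ * (wmax u₀ - w u₀ (v + 1)) := by ring
          linarith
end

section
/- Fix c ≥ 1. For all states a, b of length c (nondecreasing tuples of nonnegative reals) and every w ≥ 0 with a_1 ≤ w ≤ b_1: H(ins(a,w), b) − H(a,b) ≤ w − a_1. (Case 3 of the proof of the free-disposal hedging lemma: the new reward displaces the smallest entry of the first list but is disposed by the second list.) -/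
/-- Free-disposal insertion: given a state `l` (a nondecreasing list of length `c`
of nonnegative reals) and a new reward `w ≥ 0`, `ins l w` is `l` itself if
`w ≤ l₁` (the smallest entry), and otherwise the nondecreasing rearrangement of
`(l₂, …, l_c, w)` (the smallest entry is disposed). -/
noncomputable def ins (l : List ℝ) (w : ℝ) : List ℝ :=
  if w ≤ l.headI then l else l.tail.orderedInsert (· ≤ ·) w

/-- The hedging term for a single offline item of capacity `c`:
`H(a, b) = ( max_{1 ≤ i ≤ c} Σ_{j=1}^{i} (a_j − b_j) )⁺`. -/
noncomputable def hedge (c : ℕ) (a b : List ℝ) : ℝ :=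
  max (sSup ((fun i => ∑ j ∈ Finset.range i, (a.getD j 0 - b.getD j 0)) ''
    Set.Icc 1 c)) 0

lemma sum_getD_eq_sum_take (l : List ℝ) (i : ℕ) :
    ∑ j ∈ Finset.range i, l.getD j 0 = (l.take i).sum := by
  induction i with
  | zero => simp
  | succ n ih =>
    rw [Finset.sum_range_succ, ih, List.take_succ]
    rw [List.sum_append, List.getD_eq_getElem?_getD]
    cases h : l[n]? <;> simp [h]

lemma take_orderedInsert_le (w : ℝ) :
    ∀ (t : List ℝ), t.Pairwise (· ≤ ·) → ∀ x : ℝ, x ≤ w → ∀ i : ℕ,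
      ((t.orderedInsert (· ≤ ·) w).take i).sum ≤ ((x :: t).take i).sum + (w - x) := by
  intro t
  induction t with
  | nil =>
    intro _ x hx i
    cases i with
    | zero => simp [List.orderedInsert]; try linarith
    | succ k => simp [List.orderedInsert]; try linarith
  | cons y t' ih =>
    intro hs x hx i
    rw [List.orderedInsert]
    by_cases hwy : w ≤ y
    · rw [if_pos hwy]
      cases i with
      | zero => simp; try linarith
      | succ k => simp [List.take_succ_cons]; try linarith
    · rw [if_neg hwy]
      cases i with
      | zero => simp; try linarith
      | succ k =>
        have hyw : y ≤ w := le_of_not_ge hwy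
        have := ih (List.Pairwise.of_cons hs) y hyw k
        simp [List.take_succ_cons] at this ⊢
        linarith

/-- **Case 3 of the free-disposal hedging lemma.**
When the new reward `w` displaces the smallest entry of the first list but is
disposed by the second list (`a₁ ≤ w ≤ b₁`):
`H(ins(a,w), b) − H(a,b) ≤ w − a₁`. -/
theorem hedging_case3 (c : ℕ) (hc : 1 ≤ c) (a b : List ℝ)
    (ha_len : a.length = c) (hb_len : b.length = c)
    (ha_sorted : a.Pairwise (· ≤ ·)) (hb_sorted : b.Pairwise (· ≤ ·))
    (ha_nonneg : ∀ x ∈ a, (0 : ℝ) ≤ x) (hb_nonneg : ∀ x ∈ b, (0 : ℝ) ≤ x)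
    (w : ℝ) (hw : 0 ≤ w) (hwa : a.headI ≤ w) (hwb : w ≤ b.headI) :
    hedge c (ins a w) b - hedge c a b ≤ w - a.headI := by
  by_cases hle : w ≤ a.headI
  · simp only [ins, if_pos hle]
    linarith
  · set a' : List ℝ := ins a w with ha'
    have hins : a' = a.tail.orderedInsert (· ≤ ·) w := by
      simp [ha', ins, hle]
    set δ : ℝ := w - a.headI with hδ
    have hδ0 : 0 ≤ δ := by simp [hδ]; linarith
    -- key pointwise bound on partial sums
    have key : ∀ i : ℕ,
        (∑ j ∈ Finset.range i, (a'.getD j 0 - b.getD j 0)) ≤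
        (∑ j ∈ Finset.range i, (a.getD j 0 - b.getD j 0)) + δ := by
      intro i
      have hane : a ≠ [] := by
        intro h; rw [h] at ha_len; simp at ha_len; omega
      obtain ⟨x, t, rfl⟩ : ∃ x t, a = x :: t := by
        cases a with
        | nil => exact absurd rfl hane
        | cons x t => exact ⟨x, t, rfl⟩
      have hx : (x :: t).headI = x := rfl
      have ht : t.Pairwise (· ≤ ·) := List.Pairwise.of_cons ha_sorted
      have hxw : x ≤ w := by simpa [hx] using hwa
      have hkey := take_orderedInsert_le w t ht x hxw i
      rw [Finset.sum_sub_distrib, Finset.sum_sub_distrib,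
        sum_getD_eq_sum_take, sum_getD_eq_sum_take, sum_getD_eq_sum_take]
      have : (a'.take i).sum ≤ (((x :: t).take i).sum) + δ := by
        rw [hins]
        simpa [hδ, hx] using hkey
      linarith
    -- now lift through sSup and max
    set f : ℕ → ℝ := fun i => ∑ j ∈ Finset.range i, (a.getD j 0 - b.getD j 0) with hf
    set f' : ℕ → ℝ := fun i => ∑ j ∈ Finset.range i, (a'.getD j 0 - b.getD j 0) with hf'
    have hne : (f '' Set.Icc 1 c).Nonempty := ⟨f 1, ⟨1, by simp [hc], rfl⟩⟩
    have hbdd : BddAbove (f '' Set.Icc 1 c) :=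
      ((Set.finite_Icc 1 c).image f).bddAbove
    have hne' : (f' '' Set.Icc 1 c).Nonempty := ⟨f' 1, ⟨1, by simp [hc], rfl⟩⟩
    have hsup : sSup (f' '' Set.Icc 1 c) ≤ sSup (f '' Set.Icc 1 c) + δ := by
      apply csSup_le hne'
      rintro y ⟨i, hi, rfl⟩
      calc f' i ≤ f i + δ := key i
        _ ≤ sSup (f '' Set.Icc 1 c) + δ := by
            gcongr
            exact le_csSup hbdd ⟨i, hi, rfl⟩
    have h1 : hedge c a' b ≤ hedge c a b + δ := by
      unfold hedge
      rw [← hf, ← hf']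
      calc max (sSup (f' '' Set.Icc 1 c)) 0
          ≤ max (sSup (f '' Set.Icc 1 c) + δ) (0 + δ) :=
            max_le_max hsup (by linarith)
        _ = max (sSup (f '' Set.Icc 1 c)) 0 + δ := by
            rw [max_add_add_right]
    linarith
end
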